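/- Let z : ZMod (2t) → ℤ satisfy |z(k+1) - z(k)| = 1 and z(k+t) = t - z(k) for all k. Then the number of local minima of z equals (1/(4t))·∑_{k=0}^{2t-1} |ẑ(k)|²·(cos(πk/t) - 1)². -/

import Mathlib

lemma sum_range_zmod {N : ℕ} [NeZero N] {β : Type*} [AddCommMonoid β] (f : ZMod N → β) :
    ∑ j ∈ Finset.range N, f (j : ZMod N) = ∑ x : ZMod N, f x := by
  refine Finset.sum_nbij' (fun j => (j : ZMod N)) (fun x => x.val) ?_ ?_ ?_ ?_ ?_ <;>
    intros <;>
    simp_all [ZMod.natCast_rightInverse _, ZMod.val_lt, ZMod.val_cast_of_lt, Nat.mod_eq_of_lt,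
      Finset.mem_range]

lemma card_filter_range_zmod {N : ℕ} [NeZero N] (Q : ZMod N → Prop) [DecidablePred Q] :
    ((Finset.range N).filter (fun j : ℕ => Q ((j : ℕ) : ZMod N))).card
      = (Finset.univ.filter (fun x => Q x)).card := by
  rw [Finset.card_filter, Finset.card_filter]
  exact sum_range_zmod (fun x => if Q x then 1 else 0)




/-- Number of local minima of a `2t`-periodic integer sequence. -/
def minimaCount (t : ℕ) (z : ZMod (2*t) → ℤ) : ℕ :=
  ((Finset.range (2*t)).filter (fun k : ℕ =>
    z ((k : ZMod (2*t)) - 1) > z (k : ZMod (2*t)) ∧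
    z ((k : ZMod (2*t)) + 1) > z (k : ZMod (2*t)))).card

/-- Discrete Fourier transform of a `2t`-periodic sequence,
using the primitive `2t`-th root of unity `exp(-πi/t)`. -/
noncomputable def dft (t : ℕ) (z : ZMod (2*t) → ℂ) (k : ℕ) : ℂ :=
  ∑ j ∈ Finset.range (2*t),
    z (j : ZMod (2*t)) * Complex.exp (-(Real.pi : ℂ) * Complex.I * k * j / t)

lemma exp_period (t k j : ℕ) (ht : (t:ℂ) ≠ 0) :
    Complex.exp (-(Real.pi:ℂ) * Complex.I * k * ((j + 2*t : ℕ) : ℂ) / t)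
      = Complex.exp (-(Real.pi:ℂ) * Complex.I * k * (j : ℂ) / t) := by
  have h1 := Complex.exp_int_mul_two_pi_mul_I (-(k:ℤ))
  have h2 : (-(Real.pi:ℂ) * Complex.I * k * ((j + 2*t : ℕ) : ℂ) / t)
      = -(Real.pi:ℂ) * Complex.I * k * (j : ℂ) / t
        + ((-(k:ℤ) : ℤ) : ℂ) * (2*(Real.pi:ℂ)*Complex.I) := by
    push_cast; field_simp; ring
  rw [h2, Complex.exp_add, h1, mul_one]

lemma zmod_cast_period (t j : ℕ) : ((j + 2*t : ℕ) : ZMod (2*t)) = ((j : ℕ) : ZMod (2*t)) := by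
  simp [Nat.cast_add, ZMod.natCast_self]

lemma shift_sum {N : ℕ} (g : ℕ → ℂ) (hg : ∀ j, g (j + N) = g j) :
    ∑ j ∈ Finset.range N, g (j + 1) = ∑ j ∈ Finset.range N, g j := by
  have h1 : ∑ j ∈ Finset.range (N+1), g j = ∑ j ∈ Finset.range N, g (j+1) + g 0 :=
    Finset.sum_range_succ' g N
  have h2 : ∑ j ∈ Finset.range (N+1), g j = ∑ j ∈ Finset.range N, g j + g N :=
    Finset.sum_range_succ g N
  have h3 : g N = g 0 := by simpa using hg 0
  rw [h3] at h2; linear_combination h2 - h1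

lemma g_periodic (t k : ℕ) (ht : (t:ℂ) ≠ 0) (f : ZMod (2*t) → ℂ) (j : ℕ) :
    (fun j : ℕ => f ((j : ℕ) : ZMod (2*t))
      * Complex.exp (-(Real.pi:ℂ) * Complex.I * k * (j : ℂ) / t)) (j + 2*t)
      = (fun j : ℕ => f ((j : ℕ) : ZMod (2*t))
      * Complex.exp (-(Real.pi:ℂ) * Complex.I * k * (j : ℂ) / t)) j := by
  simp only
  rw [exp_period t k j ht, zmod_cast_period]

lemma dft_shift_up (t : ℕ) (ht : (t:ℂ) ≠ 0) (f : ZMod (2*t) → ℂ) (k : ℕ) :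
    dft t (fun x => f (x + 1)) k
      = Complex.exp ((Real.pi:ℂ) * Complex.I * k / t) * dft t f k := by
  unfold dft
  have key : ∀ j : ℕ, f ((j : ZMod (2*t)) + 1) * Complex.exp (-(Real.pi:ℂ)*Complex.I*k*j/t)
      = Complex.exp ((Real.pi:ℂ)*Complex.I*k/t) *
        (f (((j+1 : ℕ)) : ZMod (2*t)) * Complex.exp (-(Real.pi:ℂ)*Complex.I*k*((j+1:ℕ):ℂ)/t)) := by
    intro j
    have hc : ((j+1 : ℕ) : ZMod (2*t)) = (j : ZMod (2*t)) + 1 := by push_cast; ring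
    have he : Complex.exp ((Real.pi:ℂ)*Complex.I*k/t)
        * Complex.exp (-(Real.pi:ℂ)*Complex.I*k*((j+1:ℕ):ℂ)/t)
        = Complex.exp (-(Real.pi:ℂ)*Complex.I*k*(j:ℂ)/t) := by
      rw [← Complex.exp_add]; congr 1; push_cast; field_simp; ring
    rw [hc]
    linear_combination (-(f ((j : ZMod (2*t)) + 1))) * he
  calc ∑ j ∈ Finset.range (2*t), f ((j : ZMod (2*t)) + 1) * Complex.exp (-(Real.pi:ℂ)*Complex.I*k*j/t)
      = ∑ j ∈ Finset.range (2*t), Complex.exp ((Real.pi:ℂ)*Complex.I*k/t) *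
          (f (((j+1:ℕ)) : ZMod (2*t)) * Complex.exp (-(Real.pi:ℂ)*Complex.I*k*((j+1:ℕ):ℂ)/t)) :=
        Finset.sum_congr rfl (fun j _ => key j)
    _ = Complex.exp ((Real.pi:ℂ)*Complex.I*k/t) * ∑ j ∈ Finset.range (2*t),
          f ((j:ℕ) : ZMod (2*t)) * Complex.exp (-(Real.pi:ℂ)*Complex.I*k*(j:ℂ)/t) := by
        rw [← Finset.mul_sum]
        exact congrArg _ (shift_sum (fun j : ℕ => f ((j:ℕ) : ZMod (2*t))
          * Complex.exp (-(Real.pi:ℂ)*Complex.I*k*(j:ℂ)/t)) (g_periodic t k ht f))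

lemma dft_shift_down (t : ℕ) (ht : (t:ℂ) ≠ 0) (f : ZMod (2*t) → ℂ) (k : ℕ) :
    dft t (fun x => f (x - 1)) k
      = Complex.exp (-(Real.pi:ℂ) * Complex.I * k / t) * dft t f k := by
  have h := dft_shift_up t ht (fun x => f (x - 1)) k
  simp only [add_sub_cancel_right] at h
  rw [h, ← mul_assoc, ← Complex.exp_add]
  have : -(Real.pi:ℂ) * Complex.I * k / t + (Real.pi:ℂ) * Complex.I * k / t = 0 := by ring
  rw [this, Complex.exp_zero, one_mul]

lemma dft_combo (t : ℕ) (ht : (t:ℂ) ≠ 0) (Z : ZMod (2*t) → ℂ) (k : ℕ) :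
    dft t (fun x => 2 * Z x - Z (x + 1) - Z (x - 1)) k
      = (2 - Complex.exp ((Real.pi:ℂ) * Complex.I * k / t)
          - Complex.exp (-(Real.pi:ℂ) * Complex.I * k / t)) * dft t Z k := by
  rw [sub_mul, sub_mul, ← dft_shift_up t ht Z k, ← dft_shift_down t ht Z k]
  unfold dft
  rw [Finset.mul_sum, ← Finset.sum_sub_distrib, ← Finset.sum_sub_distrib]
  exact Finset.sum_congr rfl fun j _ => by beta_reduce; ring


lemma conj_exp_term (t k j' : ℕ) :
    (starRingEnd ℂ) (Complex.exp (-(Real.pi:ℂ) * Complex.I * k * j' / t))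
      = Complex.exp ((Real.pi:ℂ) * Complex.I * k * j' / t) := by
  rw [← Complex.exp_conj]
  congr 1
  simp [map_div₀, Complex.conj_I]

lemma orth (t : ℕ) (ht2 : 2 ≤ t) (j j' : ℕ) (hj : j < 2*t) (hj' : j' < 2*t) :
    ∑ k ∈ Finset.range (2*t), Complex.exp (-(Real.pi:ℂ) * Complex.I * k * j / t)
      * (starRingEnd ℂ) (Complex.exp (-(Real.pi:ℂ) * Complex.I * k * j' / t))
      = if j = j' then (2*t : ℂ) else 0 := by
  have ht0 : (t:ℂ) ≠ 0 := Nat.cast_ne_zero.mpr (by omega)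
  have hterm : ∀ k ∈ Finset.range (2*t),
      Complex.exp (-(Real.pi:ℂ) * Complex.I * k * j / t)
        * (starRingEnd ℂ) (Complex.exp (-(Real.pi:ℂ) * Complex.I * k * j' / t))
      = Complex.exp ((Real.pi:ℂ) * Complex.I * (((j':ℤ) - (j:ℤ)) : ℂ) / t) ^ k := by
    intro k _
    rw [conj_exp_term, ← Complex.exp_add, ← Complex.exp_nat_mul]
    congr 1
    push_cast
    field_simp
    ring
  rw [Finset.sum_congr rfl hterm]
  by_cases h : j = j'
  · subst h
    have hr1 : Complex.exp ((Real.pi:ℂ) * Complex.I * (((j:ℤ) - (j:ℤ)) : ℂ) / t) = 1 := by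
      have : (Real.pi:ℂ) * Complex.I * (((j:ℤ) - (j:ℤ)) : ℂ) / t = 0 := by push_cast; ring
      rw [this, Complex.exp_zero]
    rw [if_pos rfl]
    simp [hr1]
  · rw [if_neg h]
    set r : ℂ := Complex.exp ((Real.pi:ℂ) * Complex.I * (((j':ℤ) - (j:ℤ)) : ℂ) / t) with hr
    have hrpow : r ^ (2*t) = 1 := by
      rw [hr, ← Complex.exp_nat_mul]
      have : (2*t : ℕ) * ((Real.pi:ℂ) * Complex.I * (((j':ℤ) - (j:ℤ)) : ℂ) / t)
          = (((j':ℤ) - (j:ℤ) : ℤ) : ℂ) * (2 * (Real.pi:ℂ) * Complex.I) := by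
        push_cast; field_simp
      rw [this]
      exact Complex.exp_int_mul_two_pi_mul_I _
    have hrne : r ≠ 1 := by
      intro hre
      rw [hr, Complex.exp_eq_one_iff] at hre
      obtain ⟨n, hn⟩ := hre
      have hπ : (Real.pi:ℂ) ≠ 0 := Complex.ofReal_ne_zero.mpr Real.pi_ne_zero
      have hI : Complex.I ≠ 0 := Complex.I_ne_zero
      have hd' : ((j':ℂ) - (j:ℂ)) = ((2*n*t : ℤ) : ℂ) := by
        field_simp at hn
        have h2 : ((Real.pi:ℂ)*Complex.I) * ((j':ℂ) - (j:ℂ))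
            = ((Real.pi:ℂ)*Complex.I) * ((2*n*t : ℤ) : ℂ) := by
          push_cast at hn ⊢
          linear_combination ((Real.pi:ℂ)*Complex.I) * hn
        exact mul_left_cancel₀ (mul_ne_zero hπ hI) h2
      have hdz : ((j':ℤ) - (j:ℤ)) = 2*n*t := by exact_mod_cast hd'
      have h3 : (2*(t:ℤ)) ∣ ((j':ℤ) - (j:ℤ)) := ⟨n, by rw [hdz]; ring⟩
      have habs : |((j':ℤ) - (j:ℤ))| < 2*t := by rw [abs_lt]; constructor <;> omega
      have hd0 := Int.eq_zero_of_abs_lt_dvd h3 habs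
      omega
    rw [geom_sum_eq hrne, hrpow]
    simp

lemma parseval_c (t : ℕ) (ht2 : 2 ≤ t) (f : ZMod (2*t) → ℂ) :
    ∑ k ∈ Finset.range (2*t), dft t f k * (starRingEnd ℂ) (dft t f k)
      = (2*t : ℂ) * ∑ j ∈ Finset.range (2*t), f (j : ZMod (2*t)) * (starRingEnd ℂ) (f (j : ZMod (2*t))) := by
  unfold dft
  have step1 : ∀ k : ℕ,
      (∑ j ∈ Finset.range (2*t), f (j : ZMod (2*t)) * Complex.exp (-(Real.pi:ℂ) * Complex.I * k * j / t))
        * (starRingEnd ℂ) (∑ j ∈ Finset.range (2*t), f (j : ZMod (2*t)) * Complex.exp (-(Real.pi:ℂ) * Complex.I * k * j / t))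
      = ∑ j ∈ Finset.range (2*t), ∑ j' ∈ Finset.range (2*t),
          (f (j : ZMod (2*t)) * (starRingEnd ℂ) (f (j' : ZMod (2*t)))) *
          (Complex.exp (-(Real.pi:ℂ) * Complex.I * k * j / t)
            * (starRingEnd ℂ) (Complex.exp (-(Real.pi:ℂ) * Complex.I * k * j' / t))) := by
    intro k
    rw [map_sum, Finset.sum_mul_sum]
    refine Finset.sum_congr rfl fun j _ => Finset.sum_congr rfl fun j' _ => ?_
    rw [map_mul]
    ring
  rw [Finset.sum_congr rfl fun k _ => step1 k]
  rw [Finset.sum_comm]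
  have step2 : ∀ j ∈ Finset.range (2*t),
      (∑ k ∈ Finset.range (2*t), ∑ j' ∈ Finset.range (2*t),
        (f (j : ZMod (2*t)) * (starRingEnd ℂ) (f (j' : ZMod (2*t)))) *
        (Complex.exp (-(Real.pi:ℂ) * Complex.I * k * j / t)
          * (starRingEnd ℂ) (Complex.exp (-(Real.pi:ℂ) * Complex.I * k * j' / t))))
      = (2*t : ℂ) * (f (j : ZMod (2*t)) * (starRingEnd ℂ) (f (j : ZMod (2*t)))) := by
    intro j hj
    rw [Finset.sum_comm]
    have inner : ∀ j' ∈ Finset.range (2*t),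
        (∑ k ∈ Finset.range (2*t),
          (f (j : ZMod (2*t)) * (starRingEnd ℂ) (f (j' : ZMod (2*t)))) *
          (Complex.exp (-(Real.pi:ℂ) * Complex.I * k * j / t)
            * (starRingEnd ℂ) (Complex.exp (-(Real.pi:ℂ) * Complex.I * k * j' / t))))
        = (f (j : ZMod (2*t)) * (starRingEnd ℂ) (f (j' : ZMod (2*t)))) *
            (if j = j' then (2*t : ℂ) else 0) := by
      intro j' hj'
      rw [← Finset.mul_sum, orth t ht2 j j' (Finset.mem_range.mp hj) (Finset.mem_range.mp hj')]
    rw [Finset.sum_congr rfl inner]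
    simp only [mul_ite, mul_zero]
    rw [Finset.sum_ite_eq (Finset.range (2*t)) j
      (fun j' => f (j : ZMod (2*t)) * (starRingEnd ℂ) (f (j' : ZMod (2*t))) * (2*t : ℂ))]
    rw [if_pos hj]
    ring
  rw [Finset.sum_congr rfl step2, ← Finset.mul_sum]

lemma parseval_r (t : ℕ) (ht2 : 2 ≤ t) (f : ZMod (2*t) → ℂ) :
    ∑ k ∈ Finset.range (2*t), Complex.normSq (dft t f k)
      = (2*t : ℝ) * ∑ j ∈ Finset.range (2*t), Complex.normSq (f (j : ZMod (2*t))) := by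
  have h := parseval_c t ht2 f
  simp only [Complex.mul_conj] at h
  exact_mod_cast h

lemma exp_sum_cos (t k : ℕ) (ht : (t:ℂ) ≠ 0) :
    2 - Complex.exp ((Real.pi:ℂ) * Complex.I * k / t)
      - Complex.exp (-(Real.pi:ℂ) * Complex.I * k / t)
      = ((2 - 2 * Real.cos (Real.pi * k / t) : ℝ) : ℂ) := by
  have h := Complex.two_cos (((Real.pi * k / t : ℝ) : ℂ))
  have e1 : ((Real.pi * k / t : ℝ) : ℂ) * Complex.I = (Real.pi:ℂ) * Complex.I * k / t := by
    push_cast; ring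
  have e2 : -((Real.pi * k / t : ℝ) : ℂ) * Complex.I = -(Real.pi:ℂ) * Complex.I * k / t := by
    push_cast; ring
  have e3 : Complex.cos ((Real.pi * k / t : ℝ) : ℂ) = Complex.cos ((Real.pi : ℂ) * k / t) :=
    congrArg Complex.cos (by push_cast; ring)
  rw [e1, e2, e3] at h
  push_cast [Complex.ofReal_cos]
  linear_combination h


lemma count_ite {N : ℕ} [NeZero N] (c : ℤ) (P : ZMod N → Prop) [inst : DecidablePred P] :
    ∑ x : ZMod N, (if P x then c else 0) = c * ((Finset.univ.filter P).card : ℤ) := by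
  rw [← Finset.sum_filter, Finset.sum_const, nsmul_eq_mul, mul_comm]

lemma comb (t : ℕ) (ht2 : 2 ≤ t) [NeZero (2*t)] (z : ZMod (2*t) → ℤ)
    (hstep : ∀ k : ZMod (2*t), |z (k + 1) - z k| = 1) :
    ∑ x : ZMod (2*t), (2 * z x - z (x + 1) - z (x - 1))^2
      = 8 * ((Finset.univ.filter
          (fun x : ZMod (2*t) => z (x - 1) > z x ∧ z (x + 1) > z x)).card : ℤ) := by
  have ha : ∀ x : ZMod (2*t), z (x + 1) - z x = 1 ∨ z (x + 1) - z x = -1 := fun x =>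
    (abs_eq (by norm_num)).mp (hstep x)
  have hb : ∀ x : ZMod (2*t), z x - z (x - 1) = 1 ∨ z x - z (x - 1) = -1 := fun x => by
    have := ha (x - 1)
    rwa [sub_add_cancel] at this
  have keysq : ∀ x : ZMod (2*t), (2 * z x - z (x + 1) - z (x - 1))^2
      = (if z (x - 1) > z x ∧ z (x + 1) > z x then (4:ℤ) else 0)
        + (if z x > z (x - 1) ∧ z x > z (x + 1) then (4:ℤ) else 0) := by
    intro x
    rcases ha x with h1 | h1 <;> rcases hb x with h2 | h2
    · rw [if_neg (by omega), if_neg (by omega)]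
      have hv : 2 * z x - z (x + 1) - z (x - 1) = 0 := by omega
      rw [hv]; norm_num
    · rw [if_pos (by omega), if_neg (by omega)]
      have hv : 2 * z x - z (x + 1) - z (x - 1) = -2 := by omega
      rw [hv]; norm_num
    · rw [if_neg (by omega), if_pos (by omega)]
      have hv : 2 * z x - z (x + 1) - z (x - 1) = 2 := by omega
      rw [hv]; norm_num
    · rw [if_neg (by omega), if_neg (by omega)]
      have hv : 2 * z x - z (x + 1) - z (x - 1) = 0 := by omega
      rw [hv]; norm_num
  have keylin : ∀ x : ZMod (2*t), 2 * z x - z (x + 1) - z (x - 1)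
      = (if z (x - 1) > z x ∧ z (x + 1) > z x then (-2:ℤ) else 0)
        + (if z x > z (x - 1) ∧ z x > z (x + 1) then (2:ℤ) else 0) := by
    intro x
    rcases ha x with h1 | h1 <;> rcases hb x with h2 | h2
    · rw [if_neg (by omega), if_neg (by omega)]; omega
    · rw [if_pos (by omega), if_neg (by omega)]; omega
    · rw [if_neg (by omega), if_pos (by omega)]; omega
    · rw [if_neg (by omega), if_neg (by omega)]; omega
  have hsum0 : ∑ x : ZMod (2*t), (2 * z x - z (x + 1) - z (x - 1)) = 0 := by
    have hp : ∑ x : ZMod (2*t), z (x + 1) = ∑ x : ZMod (2*t), z x :=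
      Fintype.sum_equiv (Equiv.addRight (1 : ZMod (2*t))) _ _ (fun x => rfl)
    have hm : ∑ x : ZMod (2*t), z (x - 1) = ∑ x : ZMod (2*t), z x :=
      Fintype.sum_equiv (Equiv.subRight (1 : ZMod (2*t))) _ _ (fun x => rfl)
    calc ∑ x : ZMod (2*t), (2 * z x - z (x + 1) - z (x - 1))
        = ∑ x : ZMod (2*t), ((z x - z (x + 1)) + (z x - z (x - 1))) :=
          Finset.sum_congr rfl (fun x _ => by ring)
      _ = (∑ x : ZMod (2*t), z x - ∑ x : ZMod (2*t), z (x + 1))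
            + (∑ x : ZMod (2*t), z x - ∑ x : ZMod (2*t), z (x - 1)) := by
          rw [Finset.sum_add_distrib, Finset.sum_sub_distrib, Finset.sum_sub_distrib]
      _ = 0 := by rw [hp, hm]; ring
  have cardEq : ((Finset.univ.filter
        (fun x : ZMod (2*t) => z x > z (x - 1) ∧ z x > z (x + 1))).card : ℤ)
      = ((Finset.univ.filter
        (fun x : ZMod (2*t) => z (x - 1) > z x ∧ z (x + 1) > z x)).card : ℤ) := by
    have h0 := hsum0
    rw [Finset.sum_congr rfl (fun x _ => keylin x), Finset.sum_add_distrib,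
      count_ite, count_ite] at h0
    omega
  rw [Finset.sum_congr rfl (fun x _ => keysq x), Finset.sum_add_distrib,
    count_ite, count_ite]
  omega


theorem minima_eq_cos_sub_one_formula (t : ℕ) (ht : 2 ≤ t) (z : ZMod (2*t) → ℤ)
    (hstep : ∀ k : ZMod (2*t), |z (k + 1) - z k| = 1)
    (hant : ∀ k : ZMod (2*t), z (k + (t : ZMod (2*t))) = (t : ℤ) - z k) :
    (minimaCount t z : ℝ) =
      (1/(4*(t:ℝ))) * ∑ k ∈ Finset.range (2*t),
        (‖dft t (fun j => (z j : ℂ)) k‖)^2 * (Real.cos (Real.pi * k / t) - 1)^2 := by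
  haveI hN : NeZero (2*t) := ⟨by omega⟩
  have ht0 : (t:ℂ) ≠ 0 := Nat.cast_ne_zero.mpr (by omega)
  have htR : (t:ℝ) ≠ 0 := Nat.cast_ne_zero.mpr (by omega)
  set Z : ZMod (2*t) → ℂ := fun j => (z j : ℂ) with hZ
  -- minima count equals filter cardinality over ZMod
  have hmc : (minimaCount t z : ℤ) = ((Finset.univ.filter
      (fun x : ZMod (2*t) => z (x - 1) > z x ∧ z (x + 1) > z x)).card : ℤ) := by
    have := card_filter_range_zmod (fun x : ZMod (2*t) => z (x - 1) > z x ∧ z (x + 1) > z x)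
    unfold minimaCount
    exact_mod_cast this
  -- pointwise normSq identity on the sequence side
  have hVj : ∀ x : ZMod (2*t), Complex.normSq (2 * Z x - Z (x + 1) - Z (x - 1))
      = (((2 * z x - z (x + 1) - z (x - 1))^2 : ℤ) : ℝ) := by
    intro x
    have hcast : (2 * Z x - Z (x + 1) - Z (x - 1))
        = (((2 * z x - z (x + 1) - z (x - 1) : ℤ) : ℝ) : ℂ) := by
      rw [hZ]; push_cast; ring
    rw [hcast, Complex.normSq_ofReal]
    push_cast
    ring
  -- sequence-side sum
  have hsum_j : ∑ j ∈ Finset.range (2*t),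
      Complex.normSq ((fun x => 2 * Z x - Z (x + 1) - Z (x - 1)) (j : ZMod (2*t)))
      = 8 * (minimaCount t z : ℝ) := by
    have hr : ∑ j ∈ Finset.range (2*t),
        Complex.normSq ((fun x => 2 * Z x - Z (x + 1) - Z (x - 1)) (j : ZMod (2*t)))
        = ∑ x : ZMod (2*t), Complex.normSq (2 * Z x - Z (x + 1) - Z (x - 1)) :=
      sum_range_zmod (fun x => Complex.normSq (2 * Z x - Z (x + 1) - Z (x - 1)))
    rw [hr, Finset.sum_congr rfl (fun x _ => hVj x)]
    have h8 : (∑ x : ZMod (2*t), (2 * z x - z (x + 1) - z (x - 1))^2 : ℤ)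
        = 8 * (minimaCount t z : ℤ) := by rw [comb t ht z hstep, hmc]
    exact_mod_cast h8
  -- Parseval applied to the second difference
  have hpar := parseval_r t ht (fun x => 2 * Z x - Z (x + 1) - Z (x - 1))
  rw [hsum_j] at hpar
  -- Fourier-side pointwise identity
  have hdftk : ∀ k ∈ Finset.range (2*t),
      Complex.normSq (dft t (fun x => 2 * Z x - Z (x + 1) - Z (x - 1)) k)
      = 4 * ((Real.cos (Real.pi * k / t) - 1)^2 * Complex.normSq (dft t Z k)) := by
    intro k _
    rw [dft_combo t ht0 Z k, exp_sum_cos t k ht0, Complex.normSq_mul, Complex.normSq_ofReal]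
    ring
  rw [Finset.sum_congr rfl hdftk] at hpar
  -- hpar : ∑ 4*((cos-1)^2 * normSq (dft Z k)) = 2t*(8*m)
  rw [← Finset.mul_sum] at hpar
  -- final rearrangement
  have habs : ∀ k ∈ Finset.range (2*t),
      (‖dft t (fun j => (z j : ℂ)) k‖)^2 * (Real.cos (Real.pi * k / t) - 1)^2
      = (Real.cos (Real.pi * k / t) - 1)^2 * Complex.normSq (dft t Z k) := by
    intro k _
    rw [Complex.sq_norm, hZ]
    ring_nf
  rw [Finset.sum_congr rfl habs]
  field_simp
  linarith [hpar]
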